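/- For all nonnegative integers k_1, k_2 with k_1 + k_2 = k, the edge set of every k-tree G can be partitioned into two subgraphs G_1 and G_2 such that G_i has treewidth at most k_i for i = 1, 2. -/

import Mathlib

/-- A `k`-tree, defined via a construction ordering: the first `k+1` vertices form a
clique, and each later vertex's neighbourhood among earlier vertices is a `k`-clique. -/
def IsKTree {V : Type*} [Finite V] (k : ℕ) (G : SimpleGraph V) : Prop :=
  k + 1 ≤ Nat.card V ∧
  ∃ σ : Fin (Nat.card V) ≃ V,
    ∀ i : Fin (Nat.card V),
      (((i : ℕ) ≤ k) →
        {u | G.Adj (σ i) u ∧ ((σ.symm u : Fin (Nat.card V)) : ℕ) < (i : ℕ)} =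
          {u | ((σ.symm u : Fin (Nat.card V)) : ℕ) < (i : ℕ)}) ∧
      (k < (i : ℕ) →
        ({u | G.Adj (σ i) u ∧ ((σ.symm u : Fin (Nat.card V)) : ℕ) < (i : ℕ)}.ncard = k ∧
          G.IsClique {u | G.Adj (σ i) u ∧ ((σ.symm u : Fin (Nat.card V)) : ℕ) < (i : ℕ)}))

/-- `G` has treewidth at most `k`: it is a subgraph of some `k`-tree. -/
def HasTreewidthAtMost {V : Type*} (k : ℕ) (G : SimpleGraph V) : Prop :=
  ∃ (n : ℕ) (H : SimpleGraph (Fin n)), IsKTree k H ∧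
    ∃ f : V ↪ Fin n, ∀ u v, G.Adj u v → H.Adj (f u) (f v)

namespace KTP

variable {n : ℕ}

/-- The back-neighbourhood of `i`. -/
def Bset (D : SimpleGraph (Fin n)) (i : Fin n) : Set (Fin n) := {j | D.Adj i j ∧ j < i}

/-- The canonical proper `(k+1)`-colouring of a `k`-tree, by recursion on the
construction order. -/
noncomputable def col (k : ℕ) (D : SimpleGraph (Fin n)) : ℕ → ℕ
  | i => if i ≤ k then i
    else sInf {m | m ≤ k ∧ ∀ j, j < i →
      (∀ (hi : i < n) (hj : j < n), D.Adj ⟨i, hi⟩ ⟨j, hj⟩ → col k D j ≠ m)}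
termination_by i => i

noncomputable def colF (k : ℕ) (D : SimpleGraph (Fin n)) (i : Fin n) : ℕ := col k D i.val

lemma colF_small (k : ℕ) (D : SimpleGraph (Fin n)) (i : Fin n) (h : i.val ≤ k) :
    colF k D i = i.val := by
  rw [colF, col, if_pos h]

lemma colF_big (k : ℕ) (D : SimpleGraph (Fin n)) (i : Fin n) (h : k < i.val) :
    colF k D i = sInf {m | m ≤ k ∧ ∀ j ∈ Bset D i, colF k D j ≠ m} := by
  rw [colF, col, if_neg (by omega)]
  congr 1
  ext m
  simp only [Set.mem_setOf_eq, and_congr_right_iff]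
  intro _
  constructor
  · intro hyp j hj
    have := hyp j.val hj.2 i.isLt j.isLt
    simpa [colF] using this hj.1
  · intro hyp j hjlt hi hj hadj
    exact hyp ⟨j, hj⟩ ⟨by simpa using hadj, by simpa [Fin.lt_def] using hjlt⟩

variable {k : ℕ} {D : SimpleGraph (Fin n)}

lemma colF_mem_big (hB : ∀ i : Fin n, k < (i : ℕ) → (Bset D i).ncard = k) (i : Fin n)
    (h : k < i.val) :
    colF k D i ≤ k ∧ ∀ j ∈ Bset D i, colF k D j ≠ colF k D i := by
  have hne : {m | m ≤ k ∧ ∀ j ∈ Bset D i, colF k D j ≠ m}.Nonempty := by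
    by_contra hcon
    rw [Set.not_nonempty_iff_eq_empty] at hcon
    have hsub : Set.Iic k ⊆ colF k D '' Bset D i := by
      intro m hm
      by_contra hmem
      have : m ∈ ({m | m ≤ k ∧ ∀ j ∈ Bset D i, colF k D j ≠ m} : Set ℕ) :=
        ⟨hm, fun j hj hjeq => hmem ⟨j, hj, hjeq⟩⟩
      rw [hcon] at this; exact this
    have h1 : (Set.Iic k).ncard ≤ (colF k D '' Bset D i).ncard :=
      Set.ncard_le_ncard hsub (Set.Finite.image _ (Set.toFinite _))
    have h2 : (colF k D '' Bset D i).ncard ≤ (Bset D i).ncard :=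
      Set.ncard_image_le (Set.toFinite _)
    have h3 : (Set.Iic k).ncard = k + 1 := by
      rw [← Finset.coe_Iic, Set.ncard_coe_finset]; simp
    rw [hB i h] at h2
    omega
  have := Nat.sInf_mem hne
  rw [← colF_big k D i h] at this
  exact this

lemma colF_le (hB : ∀ i : Fin n, k < (i : ℕ) → (Bset D i).ncard = k) (i : Fin n) :
    colF k D i ≤ k := by
  by_cases h : i.val ≤ k
  · rw [colF_small k D i h]; exact h
  · exact (colF_mem_big hB i (by omega)).1

lemma colF_proper (hB : ∀ i : Fin n, k < (i : ℕ) → (Bset D i).ncard = k)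
    (i j : Fin n) (hadj : D.Adj i j) (hlt : j < i) : colF k D j ≠ colF k D i := by
  by_cases h : i.val ≤ k
  · rw [colF_small k D i h, colF_small k D j (le_trans (le_of_lt hlt) h)]
    exact fun hc => absurd (Fin.val_injective hc) (ne_of_lt hlt)
  · exact (colF_mem_big hB i (by omega)).2 j ⟨hadj, hlt⟩

lemma colF_ne_of_adj (hB : ∀ i : Fin n, k < (i : ℕ) → (Bset D i).ncard = k)
    {u v : Fin n} (h : D.Adj u v) : colF k D u ≠ colF k D v := by
  rcases lt_or_gt_of_ne h.ne with hlt | hlt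
  · exact fun hc => colF_proper hB v u h.symm hlt hc
  · exact fun hc => colF_proper hB u v h hlt hc.symm

lemma injOn_colF (hB : ∀ i : Fin n, k < (i : ℕ) → (Bset D i).ncard = k)
    (i : Fin n) (hclique : D.IsClique (Bset D i)) :
    Set.InjOn (colF k D) (Bset D i) := by
  intro a ha b hb hab
  by_contra hne
  exact colF_ne_of_adj hB (hclique ha hb hne) hab

lemma rainbow (hB : ∀ i : Fin n, k < (i : ℕ) → (Bset D i).ncard = k)
    (i : Fin n) (hik : k < i.val) (hclique : D.IsClique (Bset D i)) :
    colF k D '' Bset D i = Set.Iic k \ {colF k D i} := by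
  have hinj := injOn_colF hB i hclique
  have hsub : colF k D '' Bset D i ⊆ Set.Iic k \ {colF k D i} := by
    rintro x ⟨j, hj, rfl⟩
    exact ⟨colF_le hB j, colF_proper hB i j hj.1 hj.2⟩
  have h1 : (colF k D '' Bset D i).ncard = k := by
    rw [Set.ncard_image_of_injOn hinj, hB i hik]
  have h2 : (Set.Iic k \ {colF k D i}).ncard = k := by
    rw [Set.ncard_diff_singleton_of_mem (show colF k D i ∈ Set.Iic k by simpa using colF_le hB i),
      ← Finset.coe_Iic, Set.ncard_coe_finset]
    simp
  exact Set.eq_of_subset_of_ncard_le hsub (by omega) ((Set.finite_Iic _).diff)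

lemma ncard_filter (hB : ∀ i : Fin n, k < (i : ℕ) → (Bset D i).ncard = k)
    (i : Fin n) (hik : k < i.val) (hclique : D.IsClique (Bset D i))
    (A : Set ℕ) (hA : A ⊆ Set.Iic k \ {colF k D i}) :
    {j | j ∈ Bset D i ∧ colF k D j ∈ A}.ncard = A.ncard := by
  have hinj := injOn_colF hB i hclique
  have himg : colF k D '' {j | j ∈ Bset D i ∧ colF k D j ∈ A} = A := by
    apply Set.Subset.antisymm
    · rintro x ⟨j, ⟨_, hj2⟩, rfl⟩; exact hj2
    · intro a ha
      have : a ∈ colF k D '' Bset D i := by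
        rw [rainbow hB i hik hclique]; exact hA ha
      rcases this with ⟨j, hj, rfl⟩
      exact ⟨j, ⟨hj, ha⟩, rfl⟩
  conv_rhs => rw [← himg]
  rw [Set.ncard_image_of_injOn (hinj.mono (fun j hj => hj.1))]

/-- The "low" colour set. -/
def A1 (k₁ m : ℕ) : Set ℕ := {x | (m < k₁ ∧ x ≤ k₁ ∧ x ≠ m) ∨ (k₁ ≤ m ∧ x < k₁)}

/-- The "high" colour set. -/
def A2 (k₁ k m : ℕ) : Set ℕ :=
  {x | (m < k₁ ∧ k₁ < x ∧ x ≤ k) ∨ (k₁ ≤ m ∧ k₁ ≤ x ∧ x ≤ k ∧ x ≠ m)}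

lemma A1_le {k₁ m x : ℕ} (h : x ∈ A1 k₁ m) : x ≤ k₁ := by
  rcases h with ⟨_, h, _⟩ | ⟨_, h⟩ <;> omega

lemma A2_ge {k₁ k m x : ℕ} (h : x ∈ A2 k₁ k m) : k₁ ≤ x ∧ x ≤ k := by
  rcases h with ⟨_, h, h'⟩ | ⟨_, h, h', _⟩ <;> omega

lemma A1_ne {k₁ m x : ℕ} (h : x ∈ A1 k₁ m) : x ≠ m := by
  rcases h with ⟨_, _, h⟩ | ⟨h, h'⟩ <;> omega

lemma A2_ne {k₁ k m x : ℕ} (h : x ∈ A2 k₁ k m) : x ≠ m := by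
  rcases h with ⟨h, h', _⟩ | ⟨_, _, _, h⟩ <;> omega

lemma A_cover {k₁ k₂ k m x : ℕ} (hsum : k₁ + k₂ = k) (hx : x ≤ k) (hne : x ≠ m) :
    x ∈ A1 k₁ m ∨ x ∈ A2 k₁ k m := by
  simp only [A1, A2, Set.mem_setOf_eq]; omega

lemma A_disj {k₁ k m x : ℕ} (h1 : x ∈ A1 k₁ m) (h2 : x ∈ A2 k₁ k m) : False := by
  simp only [A1, A2, Set.mem_setOf_eq] at h1 h2; omega

lemma A1_trans {k₁ m a b : ℕ} (ha : a ∈ A1 k₁ m) (hb : b ∈ A1 k₁ m) (hab : a ≠ b) :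
    a ∈ A1 k₁ b := by
  simp only [A1, Set.mem_setOf_eq] at *; omega

lemma A2_trans {k₁ k m a b : ℕ} (ha : a ∈ A2 k₁ k m) (hb : b ∈ A2 k₁ k m) (hab : a ≠ b) :
    a ∈ A2 k₁ k b := by
  simp only [A2, Set.mem_setOf_eq] at *; omega

lemma A1_ncard {k₁ m : ℕ} : (A1 k₁ m).ncard = k₁ := by
  by_cases hm : m < k₁
  · have h : A1 k₁ m = Set.Iic k₁ \ {m} := by ext x; simp [A1]; omega
    rw [h, Set.ncard_diff_singleton_of_mem (show m ∈ Set.Iic k₁ by simpa using le_of_lt hm),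
      ← Finset.coe_Iic, Set.ncard_coe_finset]
    simp
  · have h : A1 k₁ m = Set.Iio k₁ := by ext x; simp [A1]; omega
    rw [h, ← Finset.coe_Iio, Set.ncard_coe_finset]; simp

lemma A2_ncard {k₁ k₂ k m : ℕ} (hsum : k₁ + k₂ = k) (hm : m ≤ k) :
    (A2 k₁ k m).ncard = k₂ := by
  by_cases hmlt : m < k₁
  · have h : A2 k₁ k m = Set.Ioc k₁ k := by ext x; simp [A2]; omega
    rw [h, ← Finset.coe_Ioc, Set.ncard_coe_finset]; simp; omega
  · have h : A2 k₁ k m = Set.Icc k₁ k \ {m} := by ext x; simp [A2]; omega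
    rw [h, Set.ncard_diff_singleton_of_mem (show m ∈ Set.Icc k₁ k by simp; omega),
      ← Finset.coe_Icc, Set.ncard_coe_finset]
    simp; omega

lemma A1_sub {k₁ k m : ℕ} (hk : k₁ ≤ k) : A1 k₁ m ⊆ Set.Iic k \ {m} :=
  fun x hx => ⟨le_trans (A1_le hx) hk, A1_ne hx⟩

lemma A2_sub {k₁ k m : ℕ} : A2 k₁ k m ⊆ Set.Iic k \ {m} :=
  fun x hx => ⟨(A2_ge hx).2, A2_ne hx⟩

lemma isKTree_of (k : ℕ) (H : SimpleGraph (Fin n)) (τ : Equiv.Perm (Fin n))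
    (hn : k + 1 ≤ n)
    (hcond : ∀ p : Fin n,
      (((p : ℕ) ≤ k) →
        {u | H.Adj (τ p) u ∧ ((τ.symm u : Fin n) : ℕ) < (p : ℕ)} =
          {u | ((τ.symm u : Fin n) : ℕ) < (p : ℕ)}) ∧
      (k < (p : ℕ) →
        ({u | H.Adj (τ p) u ∧ ((τ.symm u : Fin n) : ℕ) < (p : ℕ)}.ncard = k ∧
          H.IsClique {u | H.Adj (τ p) u ∧ ((τ.symm u : Fin n) : ℕ) < (p : ℕ)}))) :
    IsKTree k H := by
  have hcard : Nat.card (Fin n) = n := by simp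
  refine ⟨by omega, (finCongr hcard).trans τ, fun i => ?_⟩
  have := hcond (finCongr hcard i)
  simpa using this

lemma mod_le_k {k m : ℕ} : m % (k + 1) ≤ k := by
  have := Nat.mod_lt m (show 0 < k + 1 by omega); omega

/-- The rotation permutation used for `H₂`: cyclically shifts the first `k+1`
positions by `k₁`. -/
def rot (k k₁ k₂ : ℕ) (hsum : k₁ + k₂ = k) (hn : k + 1 ≤ n) : Equiv.Perm (Fin n) where
  toFun p := if p.val ≤ k then
      ⟨(p.val + k₁) % (k + 1), by have := @mod_le_k k (p.val + k₁); omega⟩ else p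
  invFun p := if p.val ≤ k then
      ⟨(p.val + (k₂ + 1)) % (k + 1), by have := @mod_le_k k (p.val + (k₂ + 1)); omega⟩ else p
  left_inv := by
    intro p
    by_cases h : p.val ≤ k
    · dsimp only
      rw [if_pos h, if_pos (by exact mod_le_k)]
      apply Fin.ext
      show ((p.val + k₁) % (k + 1) + (k₂ + 1)) % (k + 1) = p.val
      rw [Nat.mod_add_mod, show p.val + k₁ + (k₂ + 1) = p.val + (k + 1) by omega,
        Nat.add_mod_right, Nat.mod_eq_of_lt (by omega)]
    · dsimp only
      rw [if_neg h, if_neg h]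
  right_inv := by
    intro p
    by_cases h : p.val ≤ k
    · dsimp only
      rw [if_pos h, if_pos (by exact mod_le_k)]
      apply Fin.ext
      show ((p.val + (k₂ + 1)) % (k + 1) + k₁) % (k + 1) = p.val
      rw [Nat.mod_add_mod, show p.val + (k₂ + 1) + k₁ = p.val + (k + 1) by omega,
        Nat.add_mod_right, Nat.mod_eq_of_lt (by omega)]
    · dsimp only
      rw [if_neg h, if_neg h]

section rotlem

variable {k k₁ k₂ : ℕ} (hsum : k₁ + k₂ = k) (hn : k + 1 ≤ n)

lemma rot_low {p : Fin n} (h : p.val ≤ k₂) : ((rot k k₁ k₂ hsum hn) p).val = k₁ + p.val := by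
  show (if p.val ≤ k then _ else _ : Fin n).val = _
  rw [if_pos (by omega)]
  show (p.val + k₁) % (k + 1) = k₁ + p.val
  rw [Nat.mod_eq_of_lt (by omega)]; omega

lemma rot_mid {p : Fin n} (h1 : k₂ < p.val) (h2 : p.val ≤ k) :
    ((rot k k₁ k₂ hsum hn) p).val = p.val - (k₂ + 1) := by
  show (if p.val ≤ k then _ else _ : Fin n).val = _
  rw [if_pos h2]
  show (p.val + k₁) % (k + 1) = p.val - (k₂ + 1)
  rw [Nat.mod_eq_sub_mod (by omega), Nat.mod_eq_of_lt (by omega)]; omega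

lemma rot_high {p : Fin n} (h : k < p.val) : (rot k k₁ k₂ hsum hn) p = p := by
  show (if p.val ≤ k then _ else _ : Fin n) = _
  rw [if_neg (by omega)]

lemma rot_symm_low {u : Fin n} (h : u.val < k₁) :
    ((rot k k₁ k₂ hsum hn).symm u).val = u.val + (k₂ + 1) := by
  show (if u.val ≤ k then _ else _ : Fin n).val = _
  rw [if_pos (by omega)]
  show (u.val + (k₂ + 1)) % (k + 1) = u.val + (k₂ + 1)
  rw [Nat.mod_eq_of_lt (by omega)]

lemma rot_symm_mid {u : Fin n} (h1 : k₁ ≤ u.val) (h2 : u.val ≤ k) :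
    ((rot k k₁ k₂ hsum hn).symm u).val = u.val - k₁ := by
  show (if u.val ≤ k then _ else _ : Fin n).val = _
  rw [if_pos h2]
  show (u.val + (k₂ + 1)) % (k + 1) = u.val - k₁
  rw [Nat.mod_eq_sub_mod (by omega), Nat.mod_eq_of_lt (by omega)]; omega

lemma rot_symm_high {u : Fin n} (h : k < u.val) : (rot k k₁ k₂ hsum hn).symm u = u := by
  show (if u.val ≤ k then _ else _ : Fin n) = _
  rw [if_neg (by omega)]

lemma rot_symm_le {u : Fin n} (h : u.val ≤ k) : ((rot k k₁ k₂ hsum hn).symm u).val ≤ k := by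
  show (if u.val ≤ k then _ else _ : Fin n).val ≤ k
  rw [if_pos h]
  exact mod_le_k

end rotlem

/-- the low part `G₁`. -/
def D1 (k k₁ : ℕ) (D : SimpleGraph (Fin n)) : SimpleGraph (Fin n) where
  Adj u v := D.Adj u v ∧ ((u < v ∧ colF k D u ∈ A1 k₁ (colF k D v)) ∨
    (v < u ∧ colF k D v ∈ A1 k₁ (colF k D u)))
  symm := ⟨fun u v h => ⟨h.1.symm, h.2.symm⟩⟩
  loopless := ⟨fun u h => D.loopless.irrefl u h.1⟩

/-- the high part `G₂`. -/
def D2 (k k₁ : ℕ) (D : SimpleGraph (Fin n)) : SimpleGraph (Fin n) where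
  Adj u v := D.Adj u v ∧ ((u < v ∧ colF k D u ∈ A2 k₁ k (colF k D v)) ∨
    (v < u ∧ colF k D v ∈ A2 k₁ k (colF k D u)))
  symm := ⟨fun u v h => ⟨h.1.symm, h.2.symm⟩⟩
  loopless := ⟨fun u h => D.loopless.irrefl u h.1⟩

/-- extra edges completing `D2` to a `k₂`-tree. -/
def Ex (k₁ k₂ : ℕ) : SimpleGraph (Fin n) where
  Adj u v := (u.val < k₁ ∧ k₁ ≤ v.val ∧ v.val < k₁ + k₂) ∨
    (v.val < k₁ ∧ k₁ ≤ u.val ∧ u.val < k₁ + k₂)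
  symm := ⟨fun u v h => h.symm⟩
  loopless := ⟨fun u h => by rcases h with ⟨h1, h2, _⟩ | ⟨h1, h2, _⟩ <;> omega⟩

lemma ncard_val_set (s : Set ℕ) (hs : ∀ x ∈ s, x < n) :
    {u : Fin n | u.val ∈ s}.ncard = s.ncard := by
  have himg : Fin.val '' {u : Fin n | u.val ∈ s} = s := by
    ext x
    constructor
    · rintro ⟨u, hu, rfl⟩; exact hu
    · intro hx; exact ⟨⟨x, hs x hx⟩, hx, rfl⟩
  conv_rhs => rw [← himg]
  rw [Set.ncard_image_of_injOn (Fin.val_injective.injOn)]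

section main

variable {k k₁ k₂ : ℕ} {D : SimpleGraph (Fin n)}

theorem isKTree_D1 (hsum : k₁ + k₂ = k) (hn : k + 1 ≤ n)
    (hA : ∀ i : Fin n, (i : ℕ) ≤ k → ∀ j : Fin n, j < i → D.Adj i j)
    (hB : ∀ i : Fin n, k < (i : ℕ) → (Bset D i).ncard = k ∧ D.IsClique (Bset D i)) :
    IsKTree k₁ (D1 k k₁ D) := by
  have hBc : ∀ i : Fin n, k < (i : ℕ) → (Bset D i).ncard = k := fun i h => (hB i h).1
  apply isKTree_of k₁ _ (Equiv.refl _) (by omega)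
  intro p
  simp only [Equiv.refl_apply, Equiv.refl_symm]
  constructor
  · intro hp
    ext u
    simp only [Set.mem_setOf_eq, and_iff_right_iff_imp]
    intro hu
    have hup : u < p := Fin.lt_def.mpr hu
    refine ⟨hA p (by omega) u hup, Or.inr ⟨hup, ?_⟩⟩
    rw [colF_small k D u (by omega), colF_small k D p (by omega)]
    simp only [A1, Set.mem_setOf_eq]; omega
  · intro hp
    by_cases hpk : p.val ≤ k
    · -- middle band: k₁ < p ≤ k
      have hset : {u | (D1 k k₁ D).Adj p u ∧ u.val < p.val} = {u : Fin n | u.val < k₁} := by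
        ext u
        simp only [Set.mem_setOf_eq]
        constructor
        · rintro ⟨⟨hadj, hor⟩, hlt⟩
          rcases hor with ⟨hpu, _⟩ | ⟨hup, hmem⟩
          · exact absurd (Fin.lt_def.mp hpu) (by omega)
          · rw [colF_small k D u (by omega), colF_small k D p hpk] at hmem
            simp only [A1, Set.mem_setOf_eq] at hmem; omega
        · intro hu
          have hup : u < p := Fin.lt_def.mpr (by omega)
          refine ⟨⟨hA p hpk u hup, Or.inr ⟨hup, ?_⟩⟩, by omega⟩
          rw [colF_small k D u (by omega), colF_small k D p hpk]
          simp only [A1, Set.mem_setOf_eq]; omega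
      rw [hset]
      constructor
      · have h1 : {u : Fin n | u.val < k₁} = {u : Fin n | u.val ∈ Set.Iio k₁} := rfl
        rw [h1, ncard_val_set _ (fun x hx => by simp at hx; omega),
          ← Finset.coe_Iio, Set.ncard_coe_finset]
        simp
      · intro u hu v hv huv
        simp only [Set.mem_setOf_eq] at hu hv
        rcases lt_or_gt_of_ne huv with hlt | hlt
        · refine ⟨(hA v (by omega) u hlt).symm, Or.inl ⟨hlt, ?_⟩⟩
          rw [colF_small k D u (by omega), colF_small k D v (by omega)]
          simp only [A1, Set.mem_setOf_eq]
          have := Fin.lt_def.mp hlt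
          omega
        · refine ⟨hA u (by omega) v hlt, Or.inr ⟨hlt, ?_⟩⟩
          rw [colF_small k D u (by omega), colF_small k D v (by omega)]
          simp only [A1, Set.mem_setOf_eq]
          have := Fin.lt_def.mp hlt
          omega
    · -- top band: k < p
      obtain ⟨hcard, hclique⟩ := hB p (by omega)
      have hset : {u | (D1 k k₁ D).Adj p u ∧ u.val < p.val} =
          {j | j ∈ Bset D p ∧ colF k D j ∈ A1 k₁ (colF k D p)} := by
        ext u
        simp only [Set.mem_setOf_eq]
        constructor
        · rintro ⟨⟨hadj, hor⟩, hlt⟩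
          rcases hor with ⟨hpu, _⟩ | ⟨hup, hmem⟩
          · exact absurd (Fin.lt_def.mp hpu) (by omega)
          · exact ⟨⟨hadj, hup⟩, hmem⟩
        · rintro ⟨⟨hadj, hup⟩, hmem⟩
          exact ⟨⟨hadj, Or.inr ⟨hup, hmem⟩⟩, Fin.lt_def.mp hup⟩
      rw [hset]
      have hsub : A1 k₁ (colF k D p) ⊆ Set.Iic k \ {colF k D p} := A1_sub (by omega)
      constructor
      · rw [ncard_filter hBc p (by omega) hclique _ hsub, A1_ncard]
      · intro u hu v hv huv
        simp only [Set.mem_setOf_eq] at hu hv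
        have hadj : D.Adj u v := hclique hu.1 hv.1 huv
        rcases lt_or_gt_of_ne huv with hlt | hlt
        · exact ⟨hadj, Or.inl ⟨hlt, A1_trans hu.2 hv.2 (colF_ne_of_adj hBc hadj)⟩⟩
        · exact ⟨hadj, Or.inr ⟨hlt, A1_trans hv.2 hu.2 (colF_ne_of_adj hBc hadj.symm)⟩⟩

lemma D2_core (hsum : k₁ + k₂ = k)
    (hA : ∀ i : Fin n, (i : ℕ) ≤ k → ∀ j : Fin n, j < i → D.Adj i j)
    {u v : Fin n} (hu1 : k₁ ≤ u.val) (hu2 : u.val ≤ k) (hv1 : k₁ ≤ v.val) (hv2 : v.val ≤ k)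
    (huv : u ≠ v) : (D2 k k₁ D).Adj u v := by
  rcases lt_or_gt_of_ne huv with hlt | hlt
  · refine ⟨(hA v hv2 u hlt).symm, Or.inl ⟨hlt, ?_⟩⟩
    rw [colF_small k D u hu2, colF_small k D v hv2]
    simp only [A2, Set.mem_setOf_eq]
    have := Fin.lt_def.mp hlt
    omega
  · refine ⟨hA u hu2 v hlt, Or.inr ⟨hlt, ?_⟩⟩
    rw [colF_small k D u hu2, colF_small k D v hv2]
    simp only [A2, Set.mem_setOf_eq]
    have := Fin.lt_def.mp hlt
    omega

theorem isKTree_H2 (hsum : k₁ + k₂ = k) (hn : k + 1 ≤ n)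
    (hA : ∀ i : Fin n, (i : ℕ) ≤ k → ∀ j : Fin n, j < i → D.Adj i j)
    (hB : ∀ i : Fin n, k < (i : ℕ) → (Bset D i).ncard = k ∧ D.IsClique (Bset D i)) :
    IsKTree k₂ (D2 k k₁ D ⊔ Ex k₁ k₂) := by
  have hBc : ∀ i : Fin n, k < (i : ℕ) → (Bset D i).ncard = k := fun i h => (hB i h).1
  apply isKTree_of k₂ _ (rot k k₁ k₂ hsum hn) (by omega)
  intro p
  constructor
  · -- positions 0..k₂ : the core clique {k₁..k}
    intro hp
    have hv : ((rot k k₁ k₂ hsum hn) p).val = k₁ + p.val := rot_low hsum hn hp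
    ext u
    simp only [Set.mem_setOf_eq, and_iff_right_iff_imp]
    intro hu
    set q := (rot k k₁ k₂ hsum hn).symm u with hqdef
    have huq : (rot k k₁ k₂ hsum hn) q = u := Equiv.apply_symm_apply _ u
    have hqv : q.val < p.val := hu
    have huval : u.val = k₁ + q.val := by rw [← huq, rot_low hsum hn (by omega)]
    refine Or.inl (D2_core hsum hA (by omega) (by omega) (by omega) (by omega) ?_)
    intro hc
    rw [hc] at hv
    omega
  · intro hp
    by_cases hpk : p.val ≤ k
    · -- middle positions: vertices 0..k₁-1, attached to {k₁..k₁+k₂-1}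
      have hv : ((rot k k₁ k₂ hsum hn) p).val = p.val - (k₂ + 1) :=
        rot_mid hsum hn hp hpk
      set v := (rot k k₁ k₂ hsum hn) p with hvdef
      have hvk : v.val < k₁ := by omega
      have hset : {u | (D2 k k₁ D ⊔ Ex k₁ k₂).Adj v u ∧
          ((rot k k₁ k₂ hsum hn).symm u).val < p.val} =
          {u : Fin n | k₁ ≤ u.val ∧ u.val < k₁ + k₂} := by
        ext u
        simp only [Set.mem_setOf_eq, SimpleGraph.sup_adj]
        constructor
        · rintro ⟨hd2 | hex, hpos⟩
          · exfalso
            obtain ⟨hDadj, hor⟩ := hd2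
            rcases hor with ⟨hvu, hmem⟩ | ⟨huv, hmem⟩
            · rw [colF_small k D v (by omega)] at hmem
              have := A2_ge hmem; omega
            · have hult : u.val < v.val := Fin.lt_def.mp huv
              rw [colF_small k D u (by omega)] at hmem
              have := A2_ge hmem; omega
          · rcases hex with ⟨h1, h2, h3⟩ | ⟨h1, h2, h3⟩
            · exact ⟨h2, h3⟩
            · omega
        · intro hu
          refine ⟨Or.inr (Or.inl ⟨hvk, hu.1, hu.2⟩), ?_⟩
          rw [rot_symm_mid hsum hn hu.1 (by omega)]
          omega
      rw [hset]
      constructor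
      · have h1 : {u : Fin n | k₁ ≤ u.val ∧ u.val < k₁ + k₂} =
            {u : Fin n | u.val ∈ Set.Ico k₁ (k₁ + k₂)} := rfl
        rw [h1, ncard_val_set _ (fun x hx => by simp at hx; omega),
          ← Finset.coe_Ico, Set.ncard_coe_finset]
        simp
      · intro u hu w hw huw
        simp only [Set.mem_setOf_eq] at hu hw
        exact Or.inl (D2_core hsum hA hu.1 (by omega) hw.1 (by omega) huw)
    · -- top positions: k < p, vertex p itself
      have hvp : (rot k k₁ k₂ hsum hn) p = p := rot_high hsum hn (by omega)
      obtain ⟨hcard, hclique⟩ := hB p (by omega)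
      rw [hvp]
      have hset : {u | (D2 k k₁ D ⊔ Ex k₁ k₂).Adj p u ∧
          ((rot k k₁ k₂ hsum hn).symm u).val < p.val} =
          {j | j ∈ Bset D p ∧ colF k D j ∈ A2 k₁ k (colF k D p)} := by
        ext u
        simp only [Set.mem_setOf_eq, SimpleGraph.sup_adj]
        constructor
        · rintro ⟨hd2 | hex, hpos⟩
          · obtain ⟨hDadj, hor⟩ := hd2
            have hup : u < p := by
              by_cases huk : u.val ≤ k
              · exact Fin.lt_def.mpr (by omega)
              · rw [rot_symm_high hsum hn (by omega)] at hpos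
                exact Fin.lt_def.mpr hpos
            rcases hor with ⟨hpu, _⟩ | ⟨_, hmem⟩
            · exact absurd hpu (asymm hup)
            · exact ⟨⟨hDadj, hup⟩, hmem⟩
          · exfalso
            rcases hex with ⟨h1, h2, h3⟩ | ⟨h1, h2, h3⟩ <;> omega
        · rintro ⟨⟨hDadj, hup⟩, hmem⟩
          refine ⟨Or.inl ⟨hDadj, Or.inr ⟨hup, hmem⟩⟩, ?_⟩
          by_cases huk : u.val ≤ k
          · have := rot_symm_le hsum hn huk
            omega
          · rw [rot_symm_high hsum hn (by omega)]
            exact Fin.lt_def.mp hup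
      rw [hset]
      have hsub : A2 k₁ k (colF k D p) ⊆ Set.Iic k \ {colF k D p} := A2_sub
      constructor
      · rw [ncard_filter hBc p (by omega) hclique _ hsub,
          A2_ncard hsum (colF_le hBc p)]
      · intro u hu w hw huw
        simp only [Set.mem_setOf_eq] at hu hw
        have hadj : D.Adj u w := hclique hu.1 hw.1 huw
        rcases lt_or_gt_of_ne huw with hlt | hlt
        · exact Or.inl ⟨hadj, Or.inl ⟨hlt, A2_trans hu.2 hw.2 (colF_ne_of_adj hBc hadj)⟩⟩
        · exact Or.inl ⟨hadj, Or.inr ⟨hlt, A2_trans hw.2 hu.2 (colF_ne_of_adj hBc hadj.symm)⟩⟩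

end main

end KTP

/-- For `k₁ + k₂ = k`, every `k`-tree partitions into two subgraphs of treewidth at
most `k₁` and `k₂` respectively. -/
theorem ktree_treewidth_partition {V : Type*} [Finite V] (k₁ k₂ k : ℕ)
    (hsum : k₁ + k₂ = k) (G : SimpleGraph V) (h : IsKTree k G) :
    ∃ G₁ G₂ : SimpleGraph V, G₁ ≤ G ∧ G₂ ≤ G ∧
      HasTreewidthAtMost k₁ G₁ ∧ HasTreewidthAtMost k₂ G₂ ∧
      (∀ u v, G.Adj u v ↔ (G₁.Adj u v ∨ G₂.Adj u v)) ∧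
      (∀ u v, ¬ (G₁.Adj u v ∧ G₂.Adj u v)) := by
  classical
  obtain ⟨hn, σ, hσ⟩ := h
  set D : SimpleGraph (Fin (Nat.card V)) := G.comap σ with hDdef
  have hDadj : ∀ i j : Fin (Nat.card V), D.Adj i j ↔ G.Adj (σ i) (σ j) := fun i j => Iff.rfl
  -- the original back-neighbourhood sets are images of the `Fin (Nat.card V)` level ones
  have hSv : ∀ i : Fin (Nat.card V),
      {u : V | G.Adj (σ i) u ∧ ((σ.symm u : Fin (Nat.card V)) : ℕ) < (i : ℕ)} = σ '' KTP.Bset D i := by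
    intro i
    ext u
    constructor
    · rintro ⟨hadj, hlt⟩
      refine ⟨σ.symm u, ⟨?_, Fin.lt_def.mpr hlt⟩, Equiv.apply_symm_apply σ u⟩
      rw [hDadj, Equiv.apply_symm_apply]
      exact hadj
    · rintro ⟨j, ⟨hadj, hlt⟩, rfl⟩
      refine ⟨hadj, ?_⟩
      rw [Equiv.symm_apply_apply]
      exact Fin.lt_def.mp hlt
  have hA : ∀ i : Fin (Nat.card V), (i : ℕ) ≤ k → ∀ j : Fin (Nat.card V), j < i → D.Adj i j := by
    intro i hik j hj
    have h1 := (hσ i).1 hik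
    have h2 : σ j ∈ {u : V | ((σ.symm u : Fin (Nat.card V)) : ℕ) < (i : ℕ)} := by
      simp only [Set.mem_setOf_eq, Equiv.symm_apply_apply]
      exact Fin.lt_def.mp hj
    rw [← h1] at h2
    exact h2.1
  have hB : ∀ i : Fin (Nat.card V), k < (i : ℕ) →
      (KTP.Bset D i).ncard = k ∧ D.IsClique (KTP.Bset D i) := by
    intro i hik
    obtain ⟨hc1, hc2⟩ := (hσ i).2 hik
    rw [hSv i] at hc1 hc2
    constructor
    · rw [Set.ncard_image_of_injective _ σ.injective] at hc1
      exact hc1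
    · intro a ha b hb hab
      have := hc2 (Set.mem_image_of_mem σ ha) (Set.mem_image_of_mem σ hb)
        (fun hc => hab (σ.injective hc))
      exact this
  -- the partition
  refine ⟨(KTP.D1 k k₁ D).comap σ.symm, (KTP.D2 k k₁ D).comap σ.symm, ?_, ?_, ?_, ?_, ?_, ?_⟩
  · intro u v huv
    have h1 : D.Adj (σ.symm u) (σ.symm v) := huv.1
    rw [hDadj, Equiv.apply_symm_apply, Equiv.apply_symm_apply] at h1
    exact h1
  · intro u v huv
    have h1 : D.Adj (σ.symm u) (σ.symm v) := huv.1
    rw [hDadj, Equiv.apply_symm_apply, Equiv.apply_symm_apply] at h1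
    exact h1
  · exact ⟨Nat.card V, KTP.D1 k k₁ D, KTP.isKTree_D1 hsum hn hA hB, σ.symm.toEmbedding,
      fun u v huv => huv⟩
  · exact ⟨Nat.card V, KTP.D2 k k₁ D ⊔ KTP.Ex k₁ k₂, KTP.isKTree_H2 hsum hn hA hB,
      σ.symm.toEmbedding, fun u v huv => Or.inl huv⟩
  · intro u v
    constructor
    · intro huv
      have hD : D.Adj (σ.symm u) (σ.symm v) := by
        rw [hDadj, Equiv.apply_symm_apply, Equiv.apply_symm_apply]
        exact huv
      set a := σ.symm u
      set b := σ.symm v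
      have hBc : ∀ i : Fin (Nat.card V), k < (i : ℕ) → (KTP.Bset D i).ncard = k :=
        fun i hi => (hB i hi).1
      rcases lt_or_gt_of_ne hD.ne with hlt | hlt
      · have hne := KTP.colF_proper hBc b a hD.symm hlt
        have hle := KTP.colF_le hBc a
        rcases KTP.A_cover hsum hle hne with hm | hm
        · exact Or.inl ⟨hD, Or.inl ⟨hlt, hm⟩⟩
        · exact Or.inr ⟨hD, Or.inl ⟨hlt, hm⟩⟩
      · have hne := KTP.colF_proper hBc a b hD hlt
        have hle := KTP.colF_le hBc b
        rcases KTP.A_cover hsum hle hne with hm | hm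
        · exact Or.inl ⟨hD, Or.inr ⟨hlt, hm⟩⟩
        · exact Or.inr ⟨hD, Or.inr ⟨hlt, hm⟩⟩
    · intro huv
      rcases huv with h1 | h1
      · have hD : D.Adj (σ.symm u) (σ.symm v) := h1.1
        rw [hDadj, Equiv.apply_symm_apply, Equiv.apply_symm_apply] at hD
        exact hD
      · have hD : D.Adj (σ.symm u) (σ.symm v) := h1.1
        rw [hDadj, Equiv.apply_symm_apply, Equiv.apply_symm_apply] at hD
        exact hD
  · rintro u v ⟨h1, h2⟩
    obtain ⟨hD1, hor1⟩ := h1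
    obtain ⟨hD2, hor2⟩ := h2
    rcases hor1 with ⟨hlt1, hm1⟩ | ⟨hlt1, hm1⟩ <;>
      rcases hor2 with ⟨hlt2, hm2⟩ | ⟨hlt2, hm2⟩
    · exact KTP.A_disj hm1 hm2
    · exact absurd hlt2 (asymm hlt1)
    · exact absurd hlt2 (asymm hlt1)
    · exact KTP.A_disj hm1 hm2
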